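/- Let C be a linear code over GF(q) of length n with parity check matrix H having columns h_1,...,h_n, all nonzero. Define i ≡ j iff h_i and h_j are linearly dependent over GF(q). Then ≡ is an equivalence relation on {1,...,n}. Moreover, if C is completely regular with intersection number γ_1 (the number of neighbors of e_1 in C, where all-weight-one words lie at distance 1 from C), then every equivalence class of ≡ has size exactly γ_1. -/

import Mathlib

open SimpleGraph

/-- The Hamming graph on `Fin n → Q`: words adjacent iff they differ in one coordinate. -/
def hammingGraph (n : ℕ) (Q : Type*) [DecidableEq Q] : SimpleGraph (Fin n → Q) where
  Adj x y := hammingDist x y = 1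
  symm := ⟨fun x y h => by (try simp only at h ⊢); rwa [hammingDist_comm]⟩
  loopless := ⟨fun x h => by (try simp only at h); rw [hammingDist_self] at h; exact absurd h.symm one_ne_zero⟩

/-- Distance from a vertex to a code, via graph distance. -/
noncomputable def distToCode {V : Type*} (G : SimpleGraph V) (C : Set V) (x : V) : ℕ :=
  sInf {d | ∃ c ∈ C, G.dist x c = d}

/-- The `i`-th cell of the distance partition of a code. -/
noncomputable def codeCell {V : Type*} (G : SimpleGraph V) (C : Set V) (i : ℕ) : Set V :=
  {x | distToCode G C x = i}

/-- The number of neighbors of `x` lying in `S`. -/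
noncomputable def nbrCount {V : Type*} (G : SimpleGraph V) (x : V) (S : Set V) : ℕ :=
  (G.neighborSet x ∩ S).ncard

/-- Covering radius of a code. -/
noncomputable def covRad {V : Type*} (G : SimpleGraph V) (C : Set V) : ℕ :=
  sSup {d | ∃ x, distToCode G C x = d}

/-- A code is completely regular if its distance partition is equitable. -/
def IsCompRegCode {V : Type*} (G : SimpleGraph V) (C : Set V) : Prop :=
  ∀ i j : ℕ, ∀ x ∈ codeCell G C i, ∀ y ∈ codeCell G C i,
    nbrCount G x (codeCell G C j) = nbrCount G y (codeCell G C j)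

/-- Intersection numbers `γ, α, β` of a code with covering radius `ρ`. -/
def HasIntNums {V : Type*} (G : SimpleGraph V) (C : Set V) (ρ : ℕ) (γ α β : ℕ → ℕ) : Prop :=
  γ 0 = 0 ∧ β ρ = 0 ∧
  ∀ i ≤ ρ, ∀ x ∈ codeCell G C i,
    (1 ≤ i → nbrCount G x (codeCell G C (i-1)) = γ i) ∧
    nbrCount G x (codeCell G C i) = α i ∧
    (i < ρ → nbrCount G x (codeCell G C (i+1)) = β i)

/-- Equitable partition of the vertex set of a graph. -/
def IsEquitable {V : Type*} (G : SimpleGraph V) (Pa : Set (Set V)) : Prop :=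
  ∀ P ∈ Pa, ∀ P' ∈ Pa, ∀ x ∈ P, ∀ y ∈ P, nbrCount G x P' = nbrCount G y P'

/-- Quotient graph of a graph by a partition of its vertex set. -/
def quotientGraph {V : Type*} (G : SimpleGraph V) (Pa : Set (Set V)) : SimpleGraph Pa where
  Adj P P' := P ≠ P' ∧ ∃ x ∈ (P : Set V), ∃ y ∈ (P' : Set V), G.Adj x y
  symm := by
    constructor
    rintro P P' ⟨hne, x, hx, y, hy, hxy⟩
    exact ⟨hne.symm, y, hy, x, hx, hxy.symm⟩
  loopless := by constructor; rintro P ⟨hne, -⟩; exact hne rfl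

/-- Completely regular partition with common intersection numbers. -/
def IsCompRegPartition {V : Type*} (G : SimpleGraph V) (Pa : Set (Set V))
    (ρ : ℕ) (γ α β : ℕ → ℕ) : Prop :=
  Setoid.IsPartition Pa ∧ IsEquitable G Pa ∧
    ∀ P ∈ Pa, IsCompRegCode G P ∧ covRad G P = ρ ∧ HasIntNums G P ρ γ α β

/-- Distance-regular graph of diameter `D` with intersection arrays `b`, `c`. -/
def IsDistRegular {V : Type*} (G : SimpleGraph V) (D : ℕ) (b c : ℕ → ℕ) : Prop :=
  G.Connected ∧ (∀ x y : V, G.dist x y ≤ D) ∧ (∃ x y : V, G.dist x y = D) ∧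
  ∀ i ≤ D, ∀ x y : V, G.dist x y = i →
    (1 ≤ i → nbrCount G y {z | G.dist x z = i - 1} = c i) ∧
    (i < D → nbrCount G y {z | G.dist x z = i + 1} = b i)

/-- The tridiagonal quotient matrix of a completely regular code. -/
noncomputable def quotMatrix (ρ : ℕ) (γ α β : ℕ → ℕ) : Matrix (Fin (ρ+1)) (Fin (ρ+1)) ℝ :=
  Matrix.of fun i j =>
    if (j : ℕ) + 1 = (i : ℕ) then (γ (i : ℕ) : ℝ)
    else if (i : ℕ) = (j : ℕ) then (α (i : ℕ) : ℝ)
    else if (i : ℕ) + 1 = (j : ℕ) then (β (i : ℕ) : ℝ)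
    else 0


private lemma ham_update_lt {n : ℕ} {F : Type*} [DecidableEq F] (x y : Fin n → F)
    (k : Fin n) (hk : x k ≠ y k) :
    hammingDist (Function.update x k (y k)) y + 1 = hammingDist x y := by
  unfold hammingDist
  have hmem : k ∈ Finset.filter (fun i => x i ≠ y i) Finset.univ := by
    simp only [Finset.mem_filter, Finset.mem_univ, true_and]; exact hk
  have heq : Finset.filter (fun i => Function.update x k (y k) i ≠ y i) Finset.univ
      = (Finset.filter (fun i => x i ≠ y i) Finset.univ).erase k := by
    ext i
    by_cases h : i = k <;> simp [Function.update_apply, h]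
  rw [heq, Finset.card_erase_add_one hmem]

private lemma ham_update_one {n : ℕ} {F : Type*} [DecidableEq F] (x : Fin n → F)
    (k : Fin n) (v : F) (hv : x k ≠ v) :
    hammingDist x (Function.update x k v) = 1 := by
  unfold hammingDist
  rw [Finset.card_eq_one]
  refine ⟨k, ?_⟩
  ext i
  by_cases h : i = k <;> simp [Function.update_apply, h, hv]

private lemma hammingGraph_reachable {n : ℕ} {F : Type*} [DecidableEq F] :
    ∀ (d : ℕ) (x y : Fin n → F), hammingDist x y = d → (hammingGraph n F).Reachable x y := by
  intro d
  induction d with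
  | zero => intro x y h; rw [hammingDist_eq_zero] at h; exact h ▸ Reachable.refl x
  | succ d ih =>
    intro x y h
    have hxy : x ≠ y := by
      intro he; rw [he, hammingDist_self] at h; exact (Nat.succ_ne_zero d) h.symm
    obtain ⟨k, hk⟩ : ∃ k, x k ≠ y k := by
      by_contra hc; push_neg at hc; exact hxy (funext hc)
    have h1 := ham_update_lt x y k hk
    have hadj : (hammingGraph n F).Adj x (Function.update x k (y k)) :=
      ham_update_one x k (y k) hk
    exact (hadj.reachable).trans (ih _ _ (by omega))

/-- linear dependence of the (nonzero) columns of a parity check matrix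
is an equivalence relation, and for a completely regular code each class has size `γ₁`. -/
theorem parity_check_column_classes {F : Type*} [Field F] [Fintype F] [DecidableEq F]
    {r n : ℕ} (H : Matrix (Fin r) (Fin n) F)
    (hcols : ∀ j : Fin n, (fun i => H i j) ≠ 0)
    (C : Set (Fin n → F)) (hC : C = {x | H.mulVec x = 0})
    (γ1 : ℕ)
    (hcr : IsCompRegCode (hammingGraph n F) C)
    (hγ1 : ∀ x, distToCode (hammingGraph n F) C x = 1 →
      nbrCount (hammingGraph n F) x C = γ1) :
    Equivalence (fun i j : Fin n => ∃ c : F, c ≠ 0 ∧ (fun r' => H r' i) = c • (fun r' => H r' j)) ∧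
    ∀ i : Fin n,
      {j : Fin n | ∃ c : F, c ≠ 0 ∧ (fun r' => H r' j) = c • (fun r' => H r' i)}.ncard = γ1 := by
    classical
  constructor
  · refine ⟨fun i => ⟨1, one_ne_zero, (one_smul F _).symm⟩, ?_, ?_⟩
    · rintro i j ⟨c, hc, h⟩
      exact ⟨c⁻¹, inv_ne_zero hc, by rw [h, smul_smul, inv_mul_cancel₀ hc, one_smul]⟩
    · rintro i j k ⟨c, hc, h1⟩ ⟨c', hc', h2⟩
      exact ⟨c * c', mul_ne_zero hc hc', by rw [h1, h2, smul_smul]⟩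
  intro i
  set col : Fin n → (Fin r → F) := fun j r' => H r' j with hcoldef
  have hcolne : ∀ j, col j ≠ 0 := fun j => hcols j
  obtain ⟨r0, hr0⟩ : ∃ r0, col i r0 ≠ 0 := by
    have h := hcolne i
    rw [Function.ne_iff] at h
    simpa using h
  -- uniqueness of the scalar
  have huniq : ∀ (j : Fin n) (c c' : F), col j = c • col i → col j = c' • col i → c = c' := by
    intro j c c' h1 h2
    have h3 : (c - c') • col i = 0 := by rw [sub_smul, ← h1, ← h2, sub_self]
    have h4 := congrFun h3 r0
    simp only [Pi.smul_apply, smul_eq_mul, Pi.zero_apply] at h4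
    rcases mul_eq_zero.mp h4 with h5 | h5
    · exact sub_eq_zero.mp h5
    · exact absurd h5 hr0
  set T : Set (Fin n) := {j : Fin n | ∃ c : F, c ≠ 0 ∧ col j = c • col i} with hTdef
  set x : Fin n → F := Pi.single i 1 with hxdef
  have hx : H.mulVec x = col i := by
    rw [hxdef, Matrix.mulVec_single]
    funext r'
    simp [hcoldef]
  -- the chosen scalar
  set cw : Fin n → F := fun j =>
    if h : ∃ c : F, c ≠ 0 ∧ col j = c • col i then h.choose else 1 with hcwdef
  have hcw : ∀ j ∈ T, cw j ≠ 0 ∧ col j = cw j • col i := by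
    intro j hj
    have hj' : ∃ c : F, c ≠ 0 ∧ col j = c • col i := hj
    simp only [hcwdef]
    rw [dif_pos hj']
    exact hj'.choose_spec
  set f : Fin n → (Fin n → F) := fun j => x - (cw j)⁻¹ • (Pi.single j 1 : Fin n → F) with hfdef
  have hf_ne : ∀ j ∈ T, f j j ≠ x j := by
    intro j hj
    have hc := (hcw j hj).1
    simp only [hfdef, Pi.sub_apply, Pi.smul_apply, Pi.single_eq_same, smul_eq_mul, mul_one]
    intro h
    exact inv_ne_zero hc (sub_eq_self.mp h)
  have hf_eq : ∀ j, ∀ k, k ≠ j → f j k = x k := by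
    intro j k hk
    simp [hfdef, Pi.single_eq_of_ne hk]
  have hf_ham : ∀ j ∈ T, hammingDist x (f j) = 1 := by
    intro j hj
    unfold hammingDist
    rw [Finset.card_eq_one]
    refine ⟨j, ?_⟩
    ext k
    simp only [Finset.mem_filter, Finset.mem_univ, true_and, Finset.mem_singleton]
    constructor
    · intro h
      by_contra hkj
      exact h (hf_eq j k hkj).symm
    · intro h
      rw [h]
      exact fun h' => hf_ne j hj h'.symm
  have hf_code : ∀ j ∈ T, H.mulVec (f j) = 0 := by
    intro j hj
    obtain ⟨hc, hcol⟩ := hcw j hj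
    rw [hfdef]
    simp only [hxdef, Matrix.mulVec_sub, Matrix.mulVec_smul, Matrix.mulVec_single, mul_one,
      MulOpposite.op_one, one_smul]
    show col i - (cw j)⁻¹ • col j = 0
    rw [hcol, smul_smul, inv_mul_cancel₀ hc, one_smul, sub_self]
  -- the neighbor set of x inside C
  have hS : (hammingGraph n F).neighborSet x ∩ C = f '' T := by
    ext y
    simp only [Set.mem_inter_iff, SimpleGraph.mem_neighborSet, Set.mem_image]
    constructor
    · rintro ⟨hadj, hyC⟩
      have hham : hammingDist x y = 1 := hadj
      have hy0 : H.mulVec y = 0 := by rw [hC] at hyC; exact hyC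
      obtain ⟨j, hjeq⟩ := Finset.card_eq_one.mp hham
      have hdj : x j ≠ y j := by
        have : j ∈ Finset.filter (fun k => x k ≠ y k) Finset.univ := by
          rw [hjeq]; exact Finset.mem_singleton_self j
        simpa using this
      have hok : ∀ k, k ≠ j → x k = y k := by
        intro k hk
        by_contra h
        have : k ∈ Finset.filter (fun k => x k ≠ y k) Finset.univ := by simpa using h
        rw [hjeq, Finset.mem_singleton] at this
        exact hk this
      set d : F := y j - x j with hddef
      have hd : d ≠ 0 := sub_ne_zero.mpr (Ne.symm hdj)
      have hyx : y = x + d • (Pi.single j 1 : Fin n → F) := by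
        funext k
        by_cases hk : k = j
        · subst hk; simp [hddef]
        · simp [Pi.single_eq_of_ne hk, hok k hk]
      have hmv : col i + d • col j = 0 := by
        have hz := hy0
        rw [hyx] at hz
        simp only [hxdef, Matrix.mulVec_add, Matrix.mulVec_smul, Matrix.mulVec_single,
          mul_one, MulOpposite.op_one, one_smul] at hz
        exact hz
      have hcolj : col j = (-d⁻¹) • col i := by
        funext r'
        have hm := congrFun hmv r'
        simp only [Pi.add_apply, Pi.smul_apply, smul_eq_mul, Pi.zero_apply] at hm
        have h2 : d * col j r' = -(col i r') := by linear_combination hm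
        simp only [Pi.smul_apply, smul_eq_mul]
        calc col j r' = d⁻¹ * (d * col j r') := by rw [← mul_assoc, inv_mul_cancel₀ hd, one_mul]
          _ = -d⁻¹ * col i r' := by rw [h2]; ring
      have hjT : j ∈ T := ⟨-d⁻¹, neg_ne_zero.mpr (inv_ne_zero hd), hcolj⟩
      refine ⟨j, hjT, ?_⟩
      have hcwj : cw j = -d⁻¹ := huniq j _ _ (hcw j hjT).2 hcolj
      rw [hfdef]
      simp only
      rw [hcwj, hyx]
      have : (-d⁻¹)⁻¹ = -d := by field_simp
      rw [this, neg_smul, sub_neg_eq_add]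
    · rintro ⟨j, hjT, rfl⟩
      refine ⟨hf_ham j hjT, ?_⟩
      rw [hC]
      exact hf_code j hjT
  -- distToCode x = 1
  have h0C : (0 : Fin n → F) ∈ C := by rw [hC]; simp [Matrix.mulVec_zero]
  have hham0 : hammingDist x (0 : Fin n → F) = 1 := by
    unfold hammingDist
    rw [Finset.card_eq_one]
    refine ⟨i, ?_⟩
    ext k
    by_cases hk : k = i <;> simp [hxdef, Pi.single_apply, hk]
  have hadj0 : (hammingGraph n F).Adj x 0 := hham0
  have hd1 : distToCode (hammingGraph n F) C x = 1 := by
    unfold distToCode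
    have hmem : 1 ∈ {d | ∃ c ∈ C, (hammingGraph n F).dist x c = d} :=
      ⟨0, h0C, SimpleGraph.dist_eq_one_iff_adj.mpr hadj0⟩
    have hle : sInf {d | ∃ c ∈ C, (hammingGraph n F).dist x c = d} ≤ 1 := Nat.sInf_le hmem
    have hne : sInf {d | ∃ c ∈ C, (hammingGraph n F).dist x c = d} ≠ 0 := by
      intro h0
      rcases Nat.sInf_eq_zero.mp h0 with h | h
      · obtain ⟨c, hcC, hdc⟩ := h
        rcases SimpleGraph.dist_eq_zero_iff_eq_or_not_reachable.mp hdc with h | h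
        · subst h
          rw [hC] at hcC
          exact hcolne i (by rw [← hx]; exact hcC)
        · exact h (hammingGraph_reachable _ x c rfl)
      · rw [Set.eq_empty_iff_forall_notMem] at h
        exact h 1 hmem
    omega
  -- conclude
  have hg := hγ1 x hd1
  rw [← hg]
  unfold nbrCount
  rw [hS, Set.ncard_image_of_injOn]
  intro j hj j' hj' hff
  by_contra hne
  have h1 := congrFun hff j
  rw [hf_eq j' j hne] at h1
  exact hf_ne j hj h1
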